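/- Let M ≥ 1, N_R ≥ 1 with N_R ≤ M − 1, and η > 0. Define F(s) = 1 − e^{−s/η} · (∑_{i=0}^{N_R−1} C(M−1, i) sⁱ)/(1+s)^{M−1} for s ≥ 0, where C(M−1,i) is the binomial coefficient. Then F is a valid CDF on [0, ∞): F(0) = 0, F is nondecreasing on [0,∞), and F(s) → 1 as s → ∞. -/

import Mathlib

open Finset Filter Real

private lemma key_id (m : ℕ) (s : ℝ) : ∀ K : ℕ, K < m →
    (∑ i ∈ Finset.range (K+1), (m.choose i : ℝ) * (i * s^(i-1))) * (1+s)
      = (m:ℝ) * (∑ i ∈ Finset.range (K+1), (m.choose i : ℝ) * s^i)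
        - ((m:ℝ) - K) * (m.choose K : ℝ) * s^K := by
  intro K
  induction K with
  | zero => intro _; simp
  | succ K ih =>
    intro hK
    have hKm : K < m := Nat.lt_of_succ_lt hK
    have h1 : ((m.choose (K+1) : ℝ)) * (K+1) = (m.choose K : ℝ) * ((m:ℝ) - K) := by
      have := Nat.choose_succ_right_eq m K
      have hcast : ((m.choose (K+1) * (K+1) : ℕ) : ℝ) = ((m.choose K * (m - K) : ℕ) : ℝ) := by
        exact_mod_cast congrArg (Nat.cast : ℕ → ℝ) this
      push_cast [Nat.cast_sub hKm.le] at hcast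
      linarith [hcast]
    rw [Finset.sum_range_succ, Finset.sum_range_succ (fun i => (m.choose i : ℝ) * s^i)]
    have ih' := ih hKm
    push_cast
    linear_combination ih' + s^K * h1

private lemma g_deriv (m NR : ℕ) (hm : 1 ≤ m) (η : ℝ) (hη : 0 < η) (s : ℝ) (hs : 0 < 1 + s) :
    HasDerivAt (fun t : ℝ => Real.exp (-t/η) * (∑ i ∈ Finset.range NR, (m.choose i:ℝ) * t^i) / (1+t)^m)
      (Real.exp (-s/η) * (((∑ i ∈ Finset.range NR, (m.choose i:ℝ) * (i*s^(i-1))) * (1+s)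
          - (m:ℝ) * (∑ i ∈ Finset.range NR, (m.choose i:ℝ) * s^i))
          - (∑ i ∈ Finset.range NR, (m.choose i:ℝ) * s^i) * (1+s)/η) / (1+s)^(m+1)) s := by
  obtain ⟨n, rfl⟩ : ∃ n, m = n + 1 := ⟨m - 1, by omega⟩
  have hne : (1 + s) ≠ 0 := ne_of_gt hs
  have hexp : HasDerivAt (fun t : ℝ => Real.exp (-t/η)) (Real.exp (-s/η) * (-1/η)) s := by
    have h0 : HasDerivAt (fun t : ℝ => -t/η) (-1/η) s := (hasDerivAt_id s).neg.div_const η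
    exact h0.exp
  have hP : HasDerivAt (fun t : ℝ => ∑ i ∈ Finset.range NR, ((n+1).choose i : ℝ) * t^i)
      (∑ i ∈ Finset.range NR, ((n+1).choose i : ℝ) * (i * s^(i-1))) s := by
    apply HasDerivAt.fun_sum
    intro i _
    simpa [mul_comm, mul_assoc, mul_left_comm] using (hasDerivAt_pow i s).const_mul (((n+1).choose i : ℝ))
  have hden : HasDerivAt (fun t : ℝ => (1+t)^(n+1)) (((n:ℝ)+1)*(1+s)^n) s := by
    have h1 : HasDerivAt (fun t : ℝ => 1 + t) 1 s := (hasDerivAt_id s).const_add 1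
    simpa using h1.fun_pow (n+1)
  have H := (hexp.fun_mul hP).fun_div hden (pow_ne_zero _ hne)
  refine H.congr_deriv ?_
  push_cast
  field_simp
  ring

/-- Single-cell specialization of Corollary 3.1: the RBF-MMSE SINR CDF is a
valid CDF on [0, ∞). -/
theorem stmt_6 (M NR : ℕ) (hM : 1 ≤ M) (hNR : 1 ≤ NR) (hle : NR ≤ M - 1)
    (η : ℝ) (hη : 0 < η)
    (F : ℝ → ℝ)
    (hF : ∀ s : ℝ, 0 ≤ s → F s = 1 - Real.exp (-s / η) *
        (∑ i ∈ Finset.range NR, ((M - 1).choose i : ℝ) * s ^ i) /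
          (1 + s) ^ (M - 1)) :
    F 0 = 0 ∧ MonotoneOn F (Set.Ici 0) ∧ Tendsto F atTop (nhds 1) := by
  set m : ℕ := M - 1 with hm_def
  have hm : 1 ≤ m := le_trans hNR hle
  set P : ℝ → ℝ := fun s => ∑ i ∈ Finset.range NR, (m.choose i : ℝ) * s ^ i with hP_def
  set g : ℝ → ℝ := fun s => Real.exp (-s / η) * P s / (1 + s) ^ m with hg_def
  have hFg : ∀ s : ℝ, 0 ≤ s → F s = 1 - g s := fun s hs => hF s hs
  have hPnn : ∀ s : ℝ, 0 ≤ s → 0 ≤ P s := by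
    intro s hs
    exact Finset.sum_nonneg fun i _ => mul_nonneg (Nat.cast_nonneg _) (pow_nonneg hs i)
  -- Part 1
  have h0 : F 0 = 0 := by
    rw [hFg 0 le_rfl]
    have hP0 : P 0 = 1 := by
      show (∑ i ∈ Finset.range NR, (m.choose i : ℝ) * (0:ℝ) ^ i) = 1
      rw [Finset.sum_eq_single_of_mem 0 (Finset.mem_range.mpr hNR)
        (fun i _ hi => by simp [zero_pow hi])]
      simp
    simp [hg_def, hP0]
  -- Antitonicity of g
  have hanti : AntitoneOn g (Set.Ici 0) := by
    apply antitoneOn_of_deriv_nonpos (convex_Ici 0)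
    · intro x hx
      have hx1 : (0:ℝ) < 1 + x := by simp at hx; linarith
      exact (g_deriv m NR hm η hη x hx1).continuousAt.continuousWithinAt
    · rw [interior_Ici]
      intro x hx
      have hx1 : (0:ℝ) < 1 + x := by simp at hx; linarith
      exact (g_deriv m NR hm η hη x hx1).differentiableAt.differentiableWithinAt
    · rw [interior_Ici]
      intro x hx
      have hxpos : (0:ℝ) < x := hx
      have hx1 : (0:ℝ) < 1 + x := by linarith
      rw [(g_deriv m NR hm η hη x hx1).deriv]
      apply div_nonpos_of_nonpos_of_nonneg _ (pow_nonneg hx1.le _)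
      have hkey : (∑ i ∈ Finset.range NR, (m.choose i:ℝ) * (i*x^(i-1))) * (1+x)
          ≤ (m:ℝ) * ∑ i ∈ Finset.range NR, (m.choose i:ℝ) * x^i := by
        obtain ⟨K, rfl⟩ : ∃ K, NR = K + 1 := ⟨NR - 1, by omega⟩
        have hKm : K < m := by omega
        rw [key_id m x K hKm]
        have hmK : (K:ℝ) < m := by exact_mod_cast hKm
        have hnn : 0 ≤ ((m:ℝ) - K) * (m.choose K : ℝ) * x^K :=
          mul_nonneg (mul_nonneg (by linarith) (Nat.cast_nonneg _)) (pow_nonneg hxpos.le K)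
        linarith
      have hP2 : 0 ≤ (∑ i ∈ Finset.range NR, (m.choose i:ℝ) * x^i) * (1+x) / η :=
        div_nonneg (mul_nonneg (hPnn x hxpos.le) hx1.le) hη.le
      apply mul_nonpos_iff.mpr
      exact Or.inl ⟨(Real.exp_pos _).le, by linarith⟩
  have hmono : MonotoneOn F (Set.Ici 0) := by
    intro a ha b hb hab
    rw [hFg a ha, hFg b hb]
    have := hanti ha hb hab
    linarith
  -- Tendsto
  have hexp0 : Tendsto (fun s : ℝ => Real.exp (-s / η)) atTop (nhds 0) := by
    have h1 : Tendsto (fun s : ℝ => s / η) atTop atTop := Tendsto.atTop_div_const hη tendsto_id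
    have h2 : Tendsto (fun s : ℝ => -(s / η)) atTop atBot := tendsto_neg_atTop_atBot.comp h1
    have h3 := Real.tendsto_exp_atBot.comp h2
    simpa [Function.comp_def, neg_div] using h3
  set C : ℝ := ∑ i ∈ Finset.range NR, (m.choose i : ℝ) with hC_def
  have hg0 : Tendsto g atTop (nhds 0) := by
    apply squeeze_zero' (g := fun s => C * Real.exp (-s / η))
    · filter_upwards [eventually_ge_atTop (0:ℝ)] with s hs
      exact div_nonneg (mul_nonneg (Real.exp_pos _).le (hPnn s hs)) (pow_nonneg (by linarith) _)
    · filter_upwards [eventually_ge_atTop (0:ℝ)] with s hs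
      have hx1 : (0:ℝ) < 1 + s := by linarith
      have hB : (0:ℝ) < (1+s)^m := pow_pos hx1 m
      have hPB : P s ≤ C * (1+s)^m := by
        rw [hP_def, hC_def, Finset.sum_mul]
        apply Finset.sum_le_sum
        intro i hi
        have hi' : i ≤ m := by
          have := Finset.mem_range.mp hi; omega
        have h1 : s^i ≤ (1+s)^i := pow_le_pow_left₀ hs (by linarith) i
        have h2 : (1+s)^i ≤ (1+s)^m := pow_le_pow_right₀ (by linarith) hi'
        exact mul_le_mul_of_nonneg_left (le_trans h1 h2) (Nat.cast_nonneg _)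
      rw [hg_def, div_le_iff₀ hB]
      calc Real.exp (-s/η) * P s ≤ Real.exp (-s/η) * (C * (1+s)^m) :=
            mul_le_mul_of_nonneg_left hPB (Real.exp_pos _).le
        _ = C * Real.exp (-s/η) * (1+s)^m := by ring
    · simpa using hexp0.const_mul C
  have htend : Tendsto F atTop (nhds 1) := by
    have h1 : Tendsto (fun s => 1 - g s) atTop (nhds (1 - 0)) := tendsto_const_nhds.sub hg0
    rw [sub_zero] at h1
    apply h1.congr'
    filter_upwards [eventually_ge_atTop (0:ℝ)] with s hs
    exact (hFg s hs).symm
  exact ⟨h0, hmono, htend⟩
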